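/- Let J, c ∈ ℝ and f : [−1,1] → ℝ be C¹, and set ω(z) = f(z)(1−z²)² + J(z³ − 3z) + c. Then ∫_{−1}^{1} ω'(z)²/(1−z²) dz = ∫_{−1}^{1} (d/dz[f(z)(1−z²)²])²/(1−z²) dz + 12 J². In particular ∫_{−1}^{1} ω'(z)²/(1−z²) dz ≥ 12 J², with equality iff f(1−z²)² is constant. -/

import Mathlib

open MeasureTheory intervalIntegral

set_option maxHeartbeats 1000000

private lemma aux_ae_zero {μ : Measure ℝ} {F : ℝ → ℝ} (hFnn : 0 ≤ᵐ[μ] F)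
    (hFint : Integrable F μ) (h : ∫ z, F z ∂μ = 0) : F =ᵐ[μ] 0 :=
  (integral_eq_zero_iff_of_nonneg_ae hFnn hFint).1 h

/-- For ω(z) = f(z)(1−z²)² + J(z³−3z) + c with f of class C¹:
∫_{−1}^1 ω'²/(1−z²) dz = ∫_{−1}^1 (d/dz[f(1−z²)²])²/(1−z²) dz + 12J², hence the integral
is ≥ 12J² with equality iff f(1−z²)² is constant on [−1,1]. -/
theorem angular_momentum_lower_bound (J c : ℝ) (f : ℝ → ℝ) (hf : ContDiff ℝ 1 f)
    (ω g : ℝ → ℝ)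
    (hω : ω = fun z => f z * (1 - z ^ 2) ^ 2 + J * (z ^ 3 - 3 * z) + c)
    (hg : g = fun z => f z * (1 - z ^ 2) ^ 2)
    (hint₁ : IntervalIntegrable (fun z => (deriv ω z) ^ 2 / (1 - z ^ 2)) volume (-1) 1)
    (hint₂ : IntervalIntegrable (fun z => (deriv g z) ^ 2 / (1 - z ^ 2)) volume (-1) 1) :
    (∫ z in (-1 : ℝ)..1, (deriv ω z) ^ 2 / (1 - z ^ 2))
        = (∫ z in (-1 : ℝ)..1, (deriv g z) ^ 2 / (1 - z ^ 2)) + 12 * J ^ 2 ∧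
    12 * J ^ 2 ≤ ∫ z in (-1 : ℝ)..1, (deriv ω z) ^ 2 / (1 - z ^ 2) ∧
    ((∫ z in (-1 : ℝ)..1, (deriv ω z) ^ 2 / (1 - z ^ 2)) = 12 * J ^ 2 ↔
      ∃ C : ℝ, ∀ z ∈ Set.Icc (-1 : ℝ) 1, f z * (1 - z ^ 2) ^ 2 = C) := by
  -- basic regularity of g
  have hgC : ContDiff ℝ 1 g := by
    rw [hg]
    exact hf.mul (((contDiff_const.sub (contDiff_id.pow 2)).pow 2))
  have hgd : Differentiable ℝ g := hgC.differentiable one_ne_zero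
  have hG : Continuous (deriv g) := hgC.continuous_deriv le_rfl
  have hωg : ω = fun z => g z + (J * (z ^ 3 - 3 * z) + c) := by
    rw [hω, hg]; funext z; ring
  -- derivative of ω
  have hp : ∀ z : ℝ, HasDerivAt (fun z : ℝ => J * (z ^ 3 - 3 * z) + c)
      (J * (3 * z ^ 2 - 3)) z := by
    intro z
    have h1 : HasDerivAt (fun z : ℝ => z ^ 3 - 3 * z) (3 * z ^ 2 - 3) z := by
      simpa using (hasDerivAt_pow 3 z).fun_sub ((hasDerivAt_id z).const_mul 3)
    exact (h1.const_mul J).add_const c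
  have hω' : ∀ z : ℝ, deriv ω z = deriv g z - 3 * J * (1 - z ^ 2) := by
    intro z
    have h2 : HasDerivAt ω (deriv g z + J * (3 * z ^ 2 - 3)) z := by
      rw [hωg]; exact (hgd z).hasDerivAt.add (hp z)
    rw [h2.deriv]; ring
  -- pointwise identity away from ±1
  have hpoint : ∀ z : ℝ, z ≠ 1 → z ≠ -1 →
      (deriv ω z) ^ 2 / (1 - z ^ 2)
        = (deriv g z) ^ 2 / (1 - z ^ 2) - 6 * J * deriv g z + 9 * J ^ 2 * (1 - z ^ 2) := by
    intro z h1 h2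
    have hne : 1 - z ^ 2 ≠ 0 := by
      intro h
      rcases mul_eq_zero.1 (by nlinarith : (1 - z) * (1 + z) = 0) with h' | h'
      · exact h1 (by linarith)
      · exact h2 (by linarith)
    rw [hω' z]
    field_simp
    ring
  -- a.e. identity
  have hae : ∀ᵐ z : ℝ, z ∈ Set.uIoc (-1 : ℝ) 1 →
      (deriv ω z) ^ 2 / (1 - z ^ 2)
        = (deriv g z) ^ 2 / (1 - z ^ 2) - 6 * J * deriv g z + 9 * J ^ 2 * (1 - z ^ 2) := by
    have h1 : ∀ᵐ z : ℝ, z ≠ 1 := by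
      rw [ae_iff]; simpa using measure_singleton (1 : ℝ)
    have h2 : ∀ᵐ z : ℝ, z ≠ -1 := by
      rw [ae_iff]; simpa using measure_singleton (-1 : ℝ)
    filter_upwards [h1, h2] with z h1 h2 _
    exact hpoint z h1 h2
  have iB : IntervalIntegrable (fun z : ℝ => 6 * J * deriv g z) volume (-1) 1 :=
    ((continuous_const.mul hG).intervalIntegrable _ _)
  have iC : IntervalIntegrable (fun z : ℝ => 9 * J ^ 2 * (1 - z ^ 2)) volume (-1) 1 :=
    (Continuous.intervalIntegrable (by continuity) _ _)
  -- the main identity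
  have hkey : (∫ z in (-1 : ℝ)..1, (deriv ω z) ^ 2 / (1 - z ^ 2))
      = (∫ z in (-1 : ℝ)..1, (deriv g z) ^ 2 / (1 - z ^ 2)) + 12 * J ^ 2 := by
    rw [intervalIntegral.integral_congr_ae hae]
    rw [intervalIntegral.integral_add (hint₂.sub iB) iC,
      intervalIntegral.integral_sub hint₂ iB]
    have hB : (∫ z in (-1 : ℝ)..1, 6 * J * deriv g z) = 0 := by
      rw [intervalIntegral.integral_const_mul,
        intervalIntegral.integral_deriv_eq_sub (fun x _ => hgd x) (hG.intervalIntegrable _ _)]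
      have h1 : g 1 = 0 := by rw [hg]; norm_num
      have h2 : g (-1) = 0 := by rw [hg]; norm_num
      rw [h1, h2]; ring
    have hC : (∫ z in (-1 : ℝ)..1, 9 * J ^ 2 * (1 - z ^ 2)) = 12 * J ^ 2 := by
      rw [intervalIntegral.integral_const_mul,
        intervalIntegral.integral_sub intervalIntegrable_const
          ((continuous_pow 2).intervalIntegrable _ _),
        integral_pow]
      norm_num
      ring
    rw [hB, hC]; ring
  -- nonnegativity of the g-integral
  have hI0 : 0 ≤ ∫ z in (-1 : ℝ)..1, (deriv g z) ^ 2 / (1 - z ^ 2) := by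
    refine intervalIntegral.integral_nonneg (by norm_num) fun u hu => ?_
    have hd : (0:ℝ) ≤ 1 - u ^ 2 := by
      obtain ⟨h1, h2⟩ := hu
      nlinarith
    exact div_nonneg (sq_nonneg _) hd
  refine ⟨hkey, by linarith, ?_⟩
  constructor
  · -- equality implies constant
    intro heq
    have hI : (∫ z in (-1 : ℝ)..1, (deriv g z) ^ 2 / (1 - z ^ 2)) = 0 := by linarith
    set F : ℝ → ℝ := fun z => (deriv g z) ^ 2 / (1 - z ^ 2) with hF
    have hIoc : ∫ z in Set.Ioc (-1 : ℝ) 1, F z = 0 := by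
      rw [← intervalIntegral.integral_of_le (by norm_num : (-1 : ℝ) ≤ 1)]; exact hI
    have hFnn : 0 ≤ᵐ[volume.restrict (Set.Ioc (-1 : ℝ) 1)] F := by
      refine ae_restrict_of_forall_mem measurableSet_Ioc ?_
      intro u hu
      have hd : (0:ℝ) ≤ 1 - u ^ 2 := by
        obtain ⟨h1, h2⟩ := hu
        nlinarith
      exact div_nonneg (sq_nonneg _) hd
    have hFint : Integrable F (volume.restrict (Set.Ioc (-1 : ℝ) 1)) := hint₂.1
    have hF0 : F =ᵐ[volume.restrict (Set.Ioc (-1 : ℝ) 1)] 0 :=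
      aux_ae_zero hFnn hFint hIoc
    have hF0' : F =ᵐ[volume.restrict (Set.Ioo (-1 : ℝ) 1)] 0 :=
      hF0.filter_mono (ae_mono (Measure.restrict_mono Set.Ioo_subset_Ioc_self le_rfl))
    have hmeas : volume ({x | F x ≠ 0} ∩ Set.Ioo (-1 : ℝ) 1) = 0 := by
      have h := hF0'
      rw [Filter.EventuallyEq, ae_iff] at h
      rw [Measure.restrict_apply' measurableSet_Ioo] at h
      simpa using h
    have hFcont : ContinuousOn F (Set.Ioo (-1 : ℝ) 1) := by
      apply ContinuousOn.div ((hG.pow 2).continuousOn)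
        ((continuous_const.sub (continuous_pow 2)).continuousOn)
      intro x hx
      obtain ⟨h1, h2⟩ := hx
      simp only [Pi.sub_apply]
      nlinarith
    -- deriv g = 0 on Ioo
    have hderiv0 : ∀ z ∈ Set.Ioo (-1 : ℝ) 1, deriv g z = 0 := by
      intro z hz
      by_contra hne
      have hden : (0:ℝ) < 1 - z ^ 2 := by obtain ⟨h1, h2⟩ := hz; nlinarith
      have h2 : (0:ℝ) < (deriv g z) ^ 2 :=
        lt_of_le_of_ne (sq_nonneg _) (Ne.symm (pow_ne_zero 2 hne))
      have hFz : F z ≠ 0 := ne_of_gt (div_pos h2 hden)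
      have hVopen : IsOpen (Set.Ioo (-1 : ℝ) 1 ∩ F ⁻¹' {0}ᶜ) :=
        hFcont.isOpen_inter_preimage isOpen_Ioo isOpen_compl_singleton
      have hVpos : 0 < volume (Set.Ioo (-1 : ℝ) 1 ∩ F ⁻¹' {0}ᶜ) :=
        hVopen.measure_pos volume ⟨z, hz, by simpa using hFz⟩
      have hVsub : (Set.Ioo (-1 : ℝ) 1 ∩ F ⁻¹' {0}ᶜ) ⊆ {x | F x ≠ 0} ∩ Set.Ioo (-1 : ℝ) 1 :=
        fun x hx => ⟨by simpa using hx.2, hx.1⟩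
      exact hVpos.ne' (measure_mono_null hVsub hmeas)
    -- extend to Icc by continuity
    have hderivIcc : Set.EqOn (deriv g) 0 (Set.Icc (-1 : ℝ) 1) := by
      have h1 : Set.EqOn (deriv g) 0 (closure (Set.Ioo (-1 : ℝ) 1)) :=
        Set.EqOn.closure (fun x hx => hderiv0 x hx) hG continuous_const
      rwa [closure_Ioo (by norm_num : (-1 : ℝ) ≠ 1)] at h1
    refine ⟨g (-1), fun z hz => ?_⟩
    have hgz : f z * (1 - z ^ 2) ^ 2 = g z := by rw [hg]
    rw [hgz]
    have hftc : g z - g (-1) = ∫ t in (-1 : ℝ)..z, deriv g t :=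
      (intervalIntegral.integral_deriv_eq_sub (fun x _ => hgd x)
        (hG.intervalIntegrable _ _)).symm
    have hzero : (∫ t in (-1 : ℝ)..z, deriv g t) = 0 := by
      have hEq : Set.EqOn (deriv g) (fun _ => (0:ℝ)) (Set.uIcc (-1 : ℝ) z) := by
        intro t ht
        rw [Set.uIcc_of_le hz.1] at ht
        exact hderivIcc ⟨ht.1, le_trans ht.2 hz.2⟩
      rw [intervalIntegral.integral_congr hEq, intervalIntegral.integral_zero]
    have := hftc.trans hzero
    linarith
  · -- constant implies equality
    rintro ⟨C, hC⟩
    have hgz0 : ∀ z ∈ Set.Icc (-1 : ℝ) 1, g z = C := by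
      intro z hz; rw [hg]; exact hC z hz
    have hIzero : (∫ z in (-1 : ℝ)..1, (deriv g z) ^ 2 / (1 - z ^ 2)) = 0 := by
      have hEq : Set.EqOn (fun z : ℝ => (deriv g z) ^ 2 / (1 - z ^ 2))
          (fun _ => (0:ℝ)) (Set.uIcc (-1 : ℝ) 1) := by
        intro t ht
        rw [Set.uIcc_of_le (by norm_num : (-1:ℝ) ≤ 1)] at ht
        rcases eq_or_ne (1 - t ^ 2) 0 with h | h
        · simp only [h, div_zero]
        · have ht' : t ∈ Set.Ioo (-1 : ℝ) 1 := by
            obtain ⟨h1, h2⟩ := ht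
            constructor
            · rcases h1.lt_or_eq with h' | h'
              · exact h'
              · exact absurd (by rw [← h']; ring) h
            · rcases h2.lt_or_eq with h' | h'
              · exact h'
              · exact absurd (by rw [h']; ring) h
          have hev : g =ᶠ[nhds t] fun _ => C := by
            filter_upwards [isOpen_Ioo.mem_nhds ht'] with x hx
            exact hgz0 x (Set.Ioo_subset_Icc_self hx)
          have hd0 : deriv g t = 0 := by rw [hev.deriv_eq]; simp
          simp only [hd0]
          simp
      rw [intervalIntegral.integral_congr hEq, intervalIntegral.integral_zero]
    rw [hkey, hIzero]
    ring
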